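/- Symplecticity of the exact Hamiltonian flow: Let H : ℝ^{2n} → ℝ be C² and let φ : ℝ × ℝ^{2n} → ℝ^{2n} be a C² map satisfying φ(0, y) = y and ∂φ/∂t(t, y) = J⁻¹∇H(φ(t, y)) for all t ∈ ℝ and y ∈ ℝ^{2n}. Then for every t and y, the Jacobian with respect to y satisfies D_yφ(t, y)ᵀ · J · D_yφ(t, y) = J; i.e. the time-t flow map is symplectic. -/

import Mathlib

open Matrix

noncomputable section

/-- Phase space ℝ^{2n}, with coordinates indexed by `Fin n ⊕ Fin n`
(`Sum.inl` = momentum coordinates `p`, `Sum.inr` = position coordinates `q`). -/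
abbrev Phase (n : ℕ) := EuclideanSpace ℝ (Fin n ⊕ Fin n)

def toPhase {n : ℕ} (v : (Fin n ⊕ Fin n) → ℝ) : Phase n := WithLp.toLp 2 v

def ofPhase {n : ℕ} (y : Phase n) : (Fin n ⊕ Fin n) → ℝ := y

/-- The canonical symplectic matrix `J = [[0, I], [-I, 0]]`. -/
def J (n : ℕ) : Matrix (Fin n ⊕ Fin n) (Fin n ⊕ Fin n) ℝ :=
  Matrix.fromBlocks 0 1 (-1) 0

/-- The symplectic gradient (Hamiltonian vector field) `J⁻¹ ∇H`. -/
def sympGrad {n : ℕ} (H : Phase n → ℝ) (y : Phase n) : Phase n :=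
  toPhase ((J n)⁻¹.mulVec (ofPhase (gradient H y)))

/-- The Jacobian matrix of a map on phase space. -/
def jacMatrix {n : ℕ} (f : Phase n → Phase n) (y : Phase n) :
    Matrix (Fin n ⊕ Fin n) (Fin n ⊕ Fin n) ℝ :=
  Matrix.of fun i j => ofPhase (fderiv ℝ f y (EuclideanSpace.single j 1)) i


def gradCLM (n : ℕ) : (Phase n →L[ℝ] ℝ) →L[ℝ] Phase n :=
  LinearMap.toContinuousLinearMap
  { toFun := fun L => toPhase ((_root_.J n)⁻¹.mulVec fun k => L (EuclideanSpace.single k 1))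
    map_add' := by
      intro L L'
      show toPhase ((_root_.J n)⁻¹.mulVec fun k => (L + L') (EuclideanSpace.single k 1)) = _
      have h : (fun k => (L + L') (EuclideanSpace.single k 1))
          = (fun k => L (EuclideanSpace.single k 1)) + fun k => L' (EuclideanSpace.single k 1) := rfl
      rw [h, Matrix.mulVec_add]; simp [toPhase]
    map_smul' := by
      intro c L
      show toPhase ((_root_.J n)⁻¹.mulVec fun k => (c • L) (EuclideanSpace.single k 1)) = _
      have h : (fun k => (c • L) (EuclideanSpace.single k 1))
          = c • fun k => L (EuclideanSpace.single k 1) := rfl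
      rw [h, Matrix.mulVec_smul]; simp [toPhase] }

lemma gradient_coord {n : ℕ} (H : Phase n → ℝ) (x : Phase n) (k : Fin n ⊕ Fin n) :
    gradient H x k = fderiv ℝ H x (EuclideanSpace.single k 1) := by
  have h : (inner ℝ (gradient H x) (EuclideanSpace.single k (1:ℝ)) : ℝ)
      = fderiv ℝ H x (EuclideanSpace.single k 1) := by
    simp only [gradient]
    exact InnerProductSpace.toDual_symm_apply
  rw [EuclideanSpace.inner_single_right] at h
  simpa using h

lemma sympGrad_eq {n : ℕ} (H : Phase n → ℝ) :
    sympGrad H = fun x => gradCLM n (fderiv ℝ H x) := by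
  funext x
  show toPhase ((_root_.J n)⁻¹.mulVec (ofPhase (gradient H x))) = _
  have h : ofPhase (gradient H x) = fun k => fderiv ℝ H x (EuclideanSpace.single k 1) :=
    funext fun k => gradient_coord H x k
  rw [h]
  rfl

lemma fderiv_sympGrad {n : ℕ} (H : Phase n → ℝ) (hH : ContDiff ℝ 2 H) (x : Phase n) :
    fderiv ℝ (sympGrad H) x = (gradCLM n).comp (fderiv ℝ (fderiv ℝ H) x) := by
  rw [sympGrad_eq]
  have hdH : DifferentiableAt ℝ (fderiv ℝ H) x :=
    ((hH.fderiv_right (le_refl 2)).differentiable one_ne_zero).differentiableAt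
  exact ((gradCLM n).hasFDerivAt.comp x hdH.hasFDerivAt).fderiv

lemma jac_sympGrad {n : ℕ} (H : Phase n → ℝ) (hH : ContDiff ℝ 2 H) (x : Phase n) :
    jacMatrix (sympGrad H) x = (_root_.J n)⁻¹ *
      Matrix.of (fun k j => fderiv ℝ (fderiv ℝ H) x
        (EuclideanSpace.single j 1) (EuclideanSpace.single k 1)) := by
  ext i j
  show ofPhase (fderiv ℝ (sympGrad H) x (EuclideanSpace.single j 1)) i = _
  rw [fderiv_sympGrad H hH x]
  show gradCLM n (fderiv ℝ (fderiv ℝ H) x (EuclideanSpace.single j 1)) i = _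
  rw [Matrix.mul_apply]
  show (toPhase ((_root_.J n)⁻¹.mulVec fun k =>
      fderiv ℝ (fderiv ℝ H) x (EuclideanSpace.single j 1) (EuclideanSpace.single k 1))) i = _
  simp [toPhase, Matrix.mulVec, dotProduct]

lemma J_mul_J (n : ℕ) : _root_.J n * _root_.J n = -1 := by
  simp only [_root_.J, Matrix.fromBlocks_multiply]
  ext (i|i) (j|j) <;> simp [Matrix.fromBlocks, Matrix.one_apply]

lemma J_transpose (n : ℕ) : (_root_.J n)ᵀ = -_root_.J n := by
  ext (i|i) (j|j) <;> simp [_root_.J, Matrix.fromBlocks, Matrix.one_apply, eq_comm]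

lemma J_inv (n : ℕ) : (_root_.J n)⁻¹ = -_root_.J n := by
  apply Matrix.inv_eq_right_inv
  rw [Matrix.mul_neg, J_mul_J]; simp

lemma jac_sympGrad_skew {n : ℕ} (H : Phase n → ℝ) (hH : ContDiff ℝ 2 H) (x : Phase n) :
    (jacMatrix (sympGrad H) x)ᵀ * _root_.J n + _root_.J n * jacMatrix (sympGrad H) x = 0 := by
  set S : Matrix (Fin n ⊕ Fin n) (Fin n ⊕ Fin n) ℝ :=
    Matrix.of (fun k j => fderiv ℝ (fderiv ℝ H) x
      (EuclideanSpace.single j 1) (EuclideanSpace.single k 1)) with hSdef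
  have hS : Sᵀ = S := by
    have hsym := second_derivative_symmetric
      (f := H) (f' := fderiv ℝ H) (f'' := fderiv ℝ (fderiv ℝ H) x) (x := x)
      (fun y => ((hH.differentiable two_ne_zero) y).hasFDerivAt)
      (((hH.fderiv_right (le_refl 2)).differentiable one_ne_zero) x).hasFDerivAt
    ext k j
    exact hsym _ _
  rw [jac_sympGrad H hH x, _root_.J_inv]
  calc (-_root_.J n * S)ᵀ * _root_.J n + _root_.J n * (-_root_.J n * S)
      = Sᵀ * ((-_root_.J n)ᵀ * _root_.J n) + -(_root_.J n * _root_.J n) * S := by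
        rw [Matrix.transpose_mul, Matrix.mul_assoc, Matrix.neg_mul, Matrix.mul_neg,
          Matrix.neg_mul, Matrix.mul_assoc]
    _ = 0 := by
        rw [Matrix.transpose_neg, _root_.J_transpose, neg_neg, _root_.J_mul_J, hS]
        simp

lemma phase_sum_apply {n : ℕ} {ι : Type*} (s : Finset ι) (f : ι → Phase n)
    (i : Fin n ⊕ Fin n) : (∑ a ∈ s, f a) i = ∑ a ∈ s, f a i := by
  classical
  induction s using Finset.induction with
  | empty => rfl
  | insert a s h ih => rw [Finset.sum_insert h, Finset.sum_insert h, ← ih]; rfl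

lemma phase_decomp {n : ℕ} (v : Phase n) :
    v = ∑ k, v k • EuclideanSpace.single k 1 := by
  ext j
  rw [phase_sum_apply]
  simp [EuclideanSpace.single_apply]

lemma clm_apply_eq_sum {n : ℕ} (L : Phase n →L[ℝ] Phase n) (v : Phase n) (i : Fin n ⊕ Fin n) :
    L v i = ∑ k, L (EuclideanSpace.single k 1) i * v k := by
  conv_lhs => rw [phase_decomp v, map_sum]
  rw [phase_sum_apply]
  simp [mul_comm]

lemma entry_helper {n : ℕ} (X Y : Matrix (Fin n ⊕ Fin n) (Fin n ⊕ Fin n) ℝ)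
    (i j : Fin n ⊕ Fin n) :
    ∑ l, ((∑ k, X k i * _root_.J n k l) * Y l j + (∑ k, Y k i * _root_.J n k l) * X l j)
      = (Xᵀ * _root_.J n * Y + Yᵀ * _root_.J n * X) i j := by
  simp [Matrix.mul_apply, Matrix.transpose_apply, Finset.sum_add_distrib]

lemma jac_entry_sum {n : ℕ} (L : Phase n →L[ℝ] Phase n) (f : Phase n → Phase n)
    (y : Phase n) (hf : HasFDerivAt f L y) (v : Phase n) (i : Fin n ⊕ Fin n) :
    L v i = ∑ k, jacMatrix f y i k * v k := by
  rw [clm_apply_eq_sum]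
  apply Finset.sum_congr rfl
  intro k _
  congr 1
  show L (EuclideanSpace.single k 1) i = ofPhase (fderiv ℝ f y (EuclideanSpace.single k 1)) i
  rw [hf.fderiv]
  rfl

/-- Symplecticity of the exact Hamiltonian flow: if `φ : ℝ × ℝ^{2n} → ℝ^{2n}`
is a C² map with `φ(0, y) = y` and `∂φ/∂t(t, y) = J⁻¹∇H(φ(t, y))` for a C² Hamiltonian `H`,
then the Jacobian in `y` satisfies `D_yφ(t,y)ᵀ · J · D_yφ(t,y) = J` everywhere. -/
theorem stmt4 (n : ℕ) (H : Phase n → ℝ) (hH : ContDiff ℝ 2 H)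
    (φ : ℝ × Phase n → Phase n) (hφ : ContDiff ℝ 2 φ)
    (hinit : ∀ y : Phase n, φ (0, y) = y)
    (hflow : ∀ (t : ℝ) (y : Phase n),
      HasDerivAt (fun s => φ (s, y)) (sympGrad H (φ (t, y))) t) :
    ∀ (t : ℝ) (y : Phase n),
      (jacMatrix (fun z => φ (t, z)) y)ᵀ * J n * jacMatrix (fun z => φ (t, z)) y = J n := by
  intro t₀ y₀
  have hφd : Differentiable ℝ φ := hφ.differentiable two_ne_zero
  set Dφ := fderiv ℝ φ with hDφdef
  have hDφ : ∀ p, HasFDerivAt φ (Dφ p) p := fun p => (hφd p).hasFDerivAt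
  have hDφC1 : ContDiff ℝ 1 Dφ := hφ.fderiv_right (le_refl 2)
  have hD2 : ∀ p, HasFDerivAt Dφ (fderiv ℝ Dφ p) p :=
    fun p => ((hDφC1.differentiable one_ne_zero) p).hasFDerivAt
  have hsymm : ∀ p v w, fderiv ℝ Dφ p v w = fderiv ℝ Dφ p w v :=
    fun p => second_derivative_symmetric hDφ (hD2 p)
  have hcurve : ∀ (t : ℝ) (y : Phase n),
      HasDerivAt (fun s : ℝ => (s, y)) ((1:ℝ), (0 : Phase n)) t :=
    fun t y => (hasDerivAt_id t).prodMk (hasDerivAt_const t y)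
  have hpart : ∀ p : ℝ × Phase n, Dφ p ((1:ℝ), (0 : Phase n)) = sympGrad H (φ p) := by
    rintro ⟨t, y⟩
    have h1 : HasDerivAt (fun s => φ (s, y)) (Dφ (t, y) ((1:ℝ), (0 : Phase n))) t :=
      (hDφ (t, y)).comp_hasDerivAt t (hcurve t y)
    exact h1.unique (hflow t y)
  have hsGdiff : ∀ x : Phase n, DifferentiableAt ℝ (sympGrad H) x := by
    intro x
    rw [sympGrad_eq H]
    exact (gradCLM n).differentiableAt.comp x
      (((hH.fderiv_right (le_refl 2)).differentiable one_ne_zero).differentiableAt)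
  -- Jacobian in y as a composition
  have hjac : ∀ (t : ℝ),
      HasFDerivAt (fun z => φ (t, z))
        ((Dφ (t, y₀)).comp ((0 : Phase n →L[ℝ] ℝ).prod (ContinuousLinearMap.id ℝ (Phase n)))) y₀ :=
    fun t => (hDφ (t, y₀)).comp y₀ ((hasFDerivAt_const t y₀).prodMk (hasFDerivAt_id y₀))
  have hjacM : ∀ (t : ℝ) (i j : Fin n ⊕ Fin n),
      jacMatrix (fun z => φ (t, z)) y₀ i j = Dφ (t, y₀) ((0:ℝ), EuclideanSpace.single j 1) i := by
    intro t i j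
    show ofPhase (fderiv ℝ (fun z => φ (t, z)) y₀ (EuclideanSpace.single j 1)) i = _
    rw [(hjac t).fderiv]
    rfl
  -- KEY: time derivative of the Jacobian columns
  have key : ∀ (t : ℝ) (v : Phase n),
      HasDerivAt (fun s => Dφ (s, y₀) ((0:ℝ), v))
        (fderiv ℝ (sympGrad H) (φ (t, y₀)) (Dφ (t, y₀) ((0:ℝ), v))) t := by
    intro t v
    have hA : HasDerivAt (fun s => Dφ (s, y₀)) (fderiv ℝ Dφ (t, y₀) ((1:ℝ), (0:Phase n))) t :=
      (hD2 (t, y₀)).comp_hasDerivAt t (hcurve t y₀)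
    have hB : HasDerivAt (fun s => Dφ (s, y₀) ((0:ℝ), v))
        (fderiv ℝ Dφ (t, y₀) ((1:ℝ), (0:Phase n)) ((0:ℝ), v)) t :=
      (ContinuousLinearMap.apply ℝ (Phase n) ((0:ℝ), v)).hasFDerivAt.comp_hasDerivAt t hA
    have hD : fderiv ℝ Dφ (t, y₀) ((0:ℝ), v) ((1:ℝ), (0:Phase n))
        = fderiv ℝ (sympGrad H) (φ (t, y₀)) (Dφ (t, y₀) ((0:ℝ), v)) := by
      have h1 : HasFDerivAt (fun p => Dφ p ((1:ℝ), (0:Phase n)))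
          ((ContinuousLinearMap.apply ℝ (Phase n) ((1:ℝ), (0:Phase n))).comp
            (fderiv ℝ Dφ (t, y₀))) (t, y₀) := by
        exact (ContinuousLinearMap.apply ℝ (Phase n)
          ((1:ℝ), (0:Phase n))).hasFDerivAt.comp (t, y₀) (hD2 (t, y₀))
      have h2 : HasFDerivAt (fun p => sympGrad H (φ p))
          ((fderiv ℝ (sympGrad H) (φ (t, y₀))).comp (Dφ (t, y₀))) (t, y₀) :=
        (hsGdiff (φ (t, y₀))).hasFDerivAt.comp _ (hDφ (t, y₀))
      have hfun : (fun p : ℝ × Phase n => Dφ p ((1:ℝ), (0:Phase n)))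
          = fun p => sympGrad H (φ p) := funext hpart
      rw [hfun] at h1
      have heq := h1.unique h2
      calc fderiv ℝ Dφ (t, y₀) ((0:ℝ), v) ((1:ℝ), (0:Phase n))
          = ((ContinuousLinearMap.apply ℝ (Phase n) ((1:ℝ), (0:Phase n))).comp
              (fderiv ℝ Dφ (t, y₀))) ((0:ℝ), v) := rfl
        _ = ((fderiv ℝ (sympGrad H) (φ (t, y₀))).comp (Dφ (t, y₀))) ((0:ℝ), v) := by rw [heq]
        _ = fderiv ℝ (sympGrad H) (φ (t, y₀)) (Dφ (t, y₀) ((0:ℝ), v)) := rfl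
    have hfin : fderiv ℝ Dφ (t, y₀) ((1:ℝ), (0:Phase n)) ((0:ℝ), v)
        = fderiv ℝ (sympGrad H) (φ (t, y₀)) (Dφ (t, y₀) ((0:ℝ), v)) :=
      (hsymm _ _ _).trans hD
    exact hfin ▸ hB
  -- entrywise matrix ODE
  set F : ℝ → Matrix (Fin n ⊕ Fin n) (Fin n ⊕ Fin n) ℝ :=
    fun t => jacMatrix (fun z => φ (t, z)) y₀ with hFdef
  set A : ℝ → Matrix (Fin n ⊕ Fin n) (Fin n ⊕ Fin n) ℝ :=
    fun t => jacMatrix (sympGrad H) (φ (t, y₀)) with hAdef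
  have hFst : ∀ (t : ℝ) (i j : Fin n ⊕ Fin n),
      HasDerivAt (fun s => F s i j) ((A t * F t) i j) t := by
    intro t i j
    have h := key t (EuclideanSpace.single j 1)
    have h2 : HasDerivAt (fun s => (Dφ (s, y₀) ((0:ℝ), EuclideanSpace.single j 1)) i)
        ((fderiv ℝ (sympGrad H) (φ (t, y₀))
          (Dφ (t, y₀) ((0:ℝ), EuclideanSpace.single j 1))) i) t :=
      (EuclideanSpace.proj i : Phase n →L[ℝ] ℝ).hasFDerivAt.comp_hasDerivAt t h
    have hfeq : (fun s => F s i j)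
        = fun s => (Dφ (s, y₀) ((0:ℝ), EuclideanSpace.single j 1)) i :=
      funext fun s => hjacM s i j
    rw [hfeq]
    convert h2 using 1
    rw [Matrix.mul_apply,
      jac_entry_sum _ _ _ ((hsGdiff (φ (t, y₀))).hasFDerivAt) _ i]
    apply Finset.sum_congr rfl
    intro k _
    congr 1
    exact hjacM t k j
  -- derivative of the symplectic form is zero
  have hGd : ∀ (t : ℝ) (i j : Fin n ⊕ Fin n),
      HasDerivAt (fun s => ((F s)ᵀ * _root_.J n * F s) i j) 0 t := by
    intro t i j
    have expand : ∀ s : ℝ, ((F s)ᵀ * _root_.J n * F s) i j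
        = ∑ l, (∑ k, F s k i * _root_.J n k l) * F s l j := by
      intro s
      simp [Matrix.mul_apply, Matrix.transpose_apply]
    have h : HasDerivAt (fun s => ∑ l, (∑ k, F s k i * _root_.J n k l) * F s l j)
        (∑ l, ((∑ k, (A t * F t) k i * _root_.J n k l) * F t l j
          + (∑ k, F t k i * _root_.J n k l) * (A t * F t) l j)) t := by
      apply HasDerivAt.fun_sum
      intro l _
      exact (HasDerivAt.fun_sum fun k _ => (hFst t k i).mul_const (_root_.J n k l)).mul (hFst t l j)
    have hsum : (∑ l, ((∑ k, (A t * F t) k i * _root_.J n k l) * F t l j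
          + (∑ k, F t k i * _root_.J n k l) * (A t * F t) l j)) = 0 := by
      have e1 : (∑ l, ((∑ k, (A t * F t) k i * _root_.J n k l) * F t l j
          + (∑ k, F t k i * _root_.J n k l) * (A t * F t) l j))
          = ((A t * F t)ᵀ * _root_.J n * F t + (F t)ᵀ * _root_.J n * (A t * F t)) i j :=
        entry_helper (A t * F t) (F t) i j
      have e2 : (A t * F t)ᵀ * _root_.J n * F t + (F t)ᵀ * _root_.J n * (A t * F t)
          = (F t)ᵀ * ((A t)ᵀ * _root_.J n + _root_.J n * A t) * F t := by
        rw [Matrix.transpose_mul]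
        noncomm_ring
      rw [e1, e2, jac_sympGrad_skew H hH (φ (t, y₀))]
      simp
    rw [funext expand]
    exact hsum ▸ h
  -- constancy
  have hcon : ∀ i j, ((F t₀)ᵀ * _root_.J n * F t₀) i j = ((F 0)ᵀ * _root_.J n * F 0) i j := by
    intro i j
    exact is_const_of_deriv_eq_zero (fun s => (hGd s i j).differentiableAt)
      (fun s => (hGd s i j).deriv) t₀ 0
  have hF0 : F 0 = 1 := by
    have hid : (fun z : Phase n => φ (0, z)) = id := funext hinit
    ext i j
    show ofPhase (fderiv ℝ (fun z : Phase n => φ (0, z)) y₀ (EuclideanSpace.single j 1)) i = _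
    rw [hid, fderiv_id]
    simp [ofPhase, Matrix.one_apply, EuclideanSpace.single_apply, eq_comm]
  ext i j
  rw [show (jacMatrix (fun z => φ (t₀, z)) y₀) = F t₀ from rfl]
  rw [hcon i j, hF0]
  simp
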